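/- Let $m \geq 1$, let $\{[a_i, b_i]^{T}\}_{i=1}^{m}$ be unit column vectors in $\mathbb{C}^2$, and let $V = \bigotimes_{i=1}^{m} [a_i, b_i]^{T} = [v_1, \dots, v_{2^m}]^{T}$ be their Kronecker product. Then for every integer $r$ with $1 \leq r \leq 2^{m-1}$, one has $\big|\sum_{k=1}^{r} \overline{v_k}\, v_{2^m - k + 1}\big| \leq r \prod_{i=1}^{m} |a_i|\sqrt{1 - |a_i|^2} \leq r \cdot 2^{-m}$. -/

import Mathlib

open Matrix Finset

noncomputable section

/-- The Kronecker product of the `m` two-dimensional vectors `u 0, …, u (m-1)`,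
with the convention `[a₁,b₁]ᵀ ⊗ [a₂,b₂]ᵀ = [a₁a₂, b₁a₂, a₁b₂, b₁b₂]ᵀ`
(the first factor varies fastest). -/
def kronVec {m : ℕ} (u : Fin m → Fin 2 → ℂ) : Fin (2 ^ m) → ℂ :=
  fun k => ∏ i : Fin m, u i (if Nat.testBit k.val i.val then 1 else 0)

/-- The index `2^m - k + 1` in 1-indexed terms, i.e. `2^m - 1 - k` in 0-indexed terms. -/
def revIdx {m : ℕ} (k : Fin (2 ^ m)) : Fin (2 ^ m) :=
  ⟨2 ^ m - 1 - (k : ℕ), by have := Nat.two_pow_pos m; omega⟩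


lemma abs_kron_pair {m : ℕ} (u : Fin m → Fin 2 → ℂ)
    (hu : ∀ i, ‖u i 0‖ ^ 2 + ‖u i 1‖ ^ 2 = 1)
    (k : Fin (2 ^ m)) :
    ‖(starRingEnd ℂ) (kronVec u k) * kronVec u (revIdx k)‖
      = ∏ i : Fin m, ‖u i 0‖ * Real.sqrt (1 - ‖u i 0‖ ^ 2) := by
  have hrev : ∀ i : Fin m, Nat.testBit (revIdx k).val i.val = ! Nat.testBit k.val i.val := by
    intro i
    have hk : (k : ℕ) < 2 ^ m := k.isLt
    have hv : (revIdx k).val = 2 ^ m - ((k : ℕ) + 1) := by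
      simp only [revIdx]; omega
    rw [hv, Nat.testBit_two_pow_sub_succ hk]
    simp [i.isLt]
  rw [norm_mul, Complex.norm_conj]
  unfold kronVec
  rw [norm_prod, norm_prod, ← Finset.prod_mul_distrib]
  refine Finset.prod_congr rfl fun i _ => ?_
  have h1 : ‖u i 1‖ = Real.sqrt (1 - ‖u i 0‖ ^ 2) := by
    have h := hu i
    rw [show (1 : ℝ) - ‖u i 0‖ ^ 2 = ‖u i 1‖ ^ 2 by linarith,
      Real.sqrt_sq (norm_nonneg _)]
  rw [hrev i]
  cases h : Nat.testBit k.val i.val <;> simp [h, h1, mul_comm]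

theorem stmt8 (m : ℕ) (hm : 1 ≤ m) (u : Fin m → Fin 2 → ℂ)
    (hu : ∀ i, ‖u i 0‖ ^ 2 + ‖u i 1‖ ^ 2 = 1)
    (r : ℕ) (hr1 : 1 ≤ r) (hr2 : r ≤ 2 ^ (m - 1)) :
    ‖∑ k : Fin r,
        (starRingEnd ℂ)
            (kronVec u (Fin.castLE (hr2.trans (Nat.pow_le_pow_right (by norm_num) (m.sub_le 1))) k))
          * kronVec u (revIdx (Fin.castLE (hr2.trans (Nat.pow_le_pow_right (by norm_num) (m.sub_le 1))) k))‖
      ≤ (r : ℝ) * ∏ i : Fin m, ‖u i 0‖ * Real.sqrt (1 - ‖u i 0‖ ^ 2)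
    ∧ (r : ℝ) * (∏ i : Fin m, ‖u i 0‖ * Real.sqrt (1 - ‖u i 0‖ ^ 2))
      ≤ (r : ℝ) * ((2 : ℝ) ^ m)⁻¹ := by
  set P := ∏ i : Fin m, ‖u i 0‖ * Real.sqrt (1 - ‖u i 0‖ ^ 2) with hP
  have hP0 : 0 ≤ P :=
    Finset.prod_nonneg fun i _ => mul_nonneg (norm_nonneg _) (Real.sqrt_nonneg _)
  constructor
  · calc ‖∑ k : Fin r,
        (starRingEnd ℂ)
            (kronVec u (Fin.castLE (hr2.trans (Nat.pow_le_pow_right (by norm_num) (m.sub_le 1))) k))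
          * kronVec u (revIdx (Fin.castLE (hr2.trans (Nat.pow_le_pow_right (by norm_num) (m.sub_le 1))) k))‖
        ≤ ∑ k : Fin r, ‖(starRingEnd ℂ)
            (kronVec u (Fin.castLE (hr2.trans (Nat.pow_le_pow_right (by norm_num) (m.sub_le 1))) k))
          * kronVec u (revIdx (Fin.castLE (hr2.trans (Nat.pow_le_pow_right (by norm_num) (m.sub_le 1))) k))‖ :=
        norm_sum_le _ _
      _ = ∑ _k : Fin r, P := Finset.sum_congr rfl fun k _ => abs_kron_pair u hu _
      _ = (r : ℝ) * P := by simp [Finset.sum_const, nsmul_eq_mul]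
  · refine mul_le_mul_of_nonneg_left ?_ (Nat.cast_nonneg r)
    have hhalf : ∀ i : Fin m,
        ‖u i 0‖ * Real.sqrt (1 - ‖u i 0‖ ^ 2) ≤ 1 / 2 := by
      intro i
      have h := hu i
      have h0 : (0 : ℝ) ≤ ‖u i 0‖ := norm_nonneg _
      have h2 : (0 : ℝ) ≤ 1 - ‖u i 0‖ ^ 2 := by
        have := sq_nonneg (‖u i 1‖); linarith
      have hs := Real.sq_sqrt h2
      have hsn := Real.sqrt_nonneg (1 - ‖u i 0‖ ^ 2)
      nlinarith [sq_nonneg (‖u i 0‖ - Real.sqrt (1 - ‖u i 0‖ ^ 2))]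
    calc P ≤ ∏ _i : Fin m, (1 / 2 : ℝ) :=
        Finset.prod_le_prod (fun i _ => mul_nonneg (norm_nonneg _) (Real.sqrt_nonneg _))
          (fun i _ => hhalf i)
      _ = ((2 : ℝ) ^ m)⁻¹ := by
        simp [Finset.prod_const, one_div, inv_pow]
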